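/- If (G, τ) is a Hausdorff feebly compact first-countable paratopological group, then G is submetrizable. -/

import Mathlib

open Topology Filter Set Uniformity

section AuxLemmas

lemma aux_exists_metrizable {G : Type*} [Group G] (W : ℕ → Set G)
    (h1 : ∀ n, (1:G) ∈ W n)
    (hsym : ∀ n, ∀ x ∈ W n, x⁻¹ ∈ W n)
    (hmul : ∀ n, ∀ x ∈ W (n+1), ∀ y ∈ W (n+1), x * y ∈ W n)
    (hsep : ∀ z : G, (∀ n, z ∈ W n) → z = 1) :
    ∃ t' : TopologicalSpace G, @TopologicalSpace.MetrizableSpace G t' ∧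
      ∀ s : Set G, t'.IsOpen s → ∀ x ∈ s, ∃ n, {y : G | x⁻¹ * y ∈ W n} ⊆ s := by
  have hanti : Antitone W := antitone_nat_of_succ_le fun n x hx => by
    simpa using hmul n x hx 1 (h1 (n+1))
  set E : ℕ → Set (G × G) := fun n => {p | p.1⁻¹ * p.2 ∈ W n} with hEdef
  have hEanti : Antitone E := fun m n h p hp => hanti h hp
  let B : FilterBasis (G × G) :=
    { sets := Set.range E
      nonempty := ⟨E 0, Set.mem_range_self 0⟩
      inter_sets := by
        rintro _ _ ⟨m, rfl⟩ ⟨n, rfl⟩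
        exact ⟨E (max m n), Set.mem_range_self _,
          Set.subset_inter (hEanti (le_max_left _ _)) (hEanti (le_max_right _ _))⟩ }
  let core : UniformSpace.Core G := UniformSpace.Core.mkOfBasis B
    (by rintro r ⟨n, rfl⟩ x
        show x⁻¹ * x ∈ W n
        simpa using h1 n)
    (by rintro r ⟨n, rfl⟩
        refine ⟨E n, ⟨n, rfl⟩, fun p hp => ?_⟩
        show (p.2)⁻¹ * p.1 ∈ W n
        have := hsym n _ hp
        simpa using this)
    (by rintro r ⟨n, rfl⟩
        refine ⟨E (n+1), ⟨n+1, rfl⟩, ?_⟩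
        rintro ⟨a, c⟩ ⟨b, hab, hbc⟩
        show a⁻¹ * c ∈ W n
        have := hmul n _ hab _ hbc
        simpa [mul_assoc] using this)
  letI U : UniformSpace G := UniformSpace.ofCore core
  have hmem : ∀ s : Set (G × G), s ∈ 𝓤 G ↔ ∃ n, E n ⊆ s := by
    intro s
    have : s ∈ 𝓤 G ↔ s ∈ B.filter := Iff.rfl
    rw [this, FilterBasis.mem_filter_iff]
    constructor
    · rintro ⟨t', ⟨n, rfl⟩, h⟩; exact ⟨n, h⟩
    · rintro ⟨n, h⟩; exact ⟨E n, ⟨n, rfl⟩, h⟩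
  have hbasis : (𝓤 G).HasBasis (fun _ : ℕ => True) E :=
    ⟨fun s => by simpa using hmem s⟩
  haveI : (𝓤 G).IsCountablyGenerated := hbasis.isCountablyGenerated
  haveI : T1Space G := by
    refine ⟨fun x => ?_⟩
    rw [← isOpen_compl_iff, isOpen_iff_ball_subset]
    intro z hz
    have hne : z⁻¹ * x ≠ 1 := by
      intro h
      exact hz (by simpa [eq_comm] using inv_mul_eq_one.mp h)
    have : ∃ n, z⁻¹ * x ∉ W n := by
      by_contra h
      push_neg at h
      exact hne (hsep _ h)
    obtain ⟨n, hn⟩ := this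
    refine ⟨E n, (hmem _).2 ⟨n, subset_rfl⟩, fun y hy => ?_⟩
    intro hyx
    rw [Set.mem_singleton_iff] at hyx
    exact hn (by rw [hyx] at hy; exact hy)
  haveI : T0Space G := inferInstance
  have hm := @UniformSpace.metrizableSpace G U _ _
  refine ⟨U.toTopologicalSpace, hm, ?_⟩
  intro s hs x hx
  have hs' : IsOpen s := hs
  rw [isOpen_iff_ball_subset] at hs'
  obtain ⟨V', hV', hball⟩ := hs' x hx
  obtain ⟨n, hn⟩ := (hmem V').1 hV'
  exact ⟨n, fun y hy => hball (hn hy)⟩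

lemma exists_nbhd_seq (G : Type*) [Group G] [TopologicalSpace G] [ContinuousMul G]
    [FirstCountableTopology G] :
    ∃ V : ℕ → Set G, (∀ n, IsOpen (V n)) ∧ (∀ n, (1:G) ∈ V n) ∧
      (∀ n, ∀ a ∈ V (n+1), ∀ b ∈ V (n+1), a * b ∈ V n) ∧
      (∀ s ∈ 𝓝 (1:G), ∃ n, V n ⊆ s) := by
  classical
  obtain ⟨u, hu⟩ := (𝓝 (1:G)).exists_antitone_basis
  have humem : ∀ n, u n ∈ 𝓝 (1:G) := fun n => hu.1.mem_of_mem trivial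
  have step : ∀ S : Set G, S ∈ 𝓝 (1:G) →
      ∃ T : Set G, IsOpen T ∧ (1:G) ∈ T ∧ ∀ a ∈ T, ∀ b ∈ T, a * b ∈ S := by
    intro S hS
    obtain ⟨T, hTo, hT1, hTS⟩ := exists_open_nhds_one_mul_subset hS
    exact ⟨T, hTo, hT1, fun a ha b hb => hTS (mul_mem_mul ha hb)⟩
  choose f hfo hf1 hfm using step
  let f' : Set G → Set G := fun S => if h : S ∈ 𝓝 (1:G) then f S h else Set.univ
  have hf'o : ∀ S (h : S ∈ 𝓝 (1:G)), IsOpen (f' S) := by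
    intro S h; simp only [f', dif_pos h]; exact hfo S h
  have hf'1 : ∀ S (h : S ∈ 𝓝 (1:G)), (1:G) ∈ f' S := by
    intro S h; simp only [f', dif_pos h]; exact hf1 S h
  have hf'm : ∀ S (h : S ∈ 𝓝 (1:G)), ∀ a ∈ f' S, ∀ b ∈ f' S, a * b ∈ S := by
    intro S h; simp only [f', dif_pos h]; exact hfm S h
  let V : ℕ → Set G := fun n => Nat.rec (f' (u 0)) (fun k ih => f' (ih ∩ u (k+1))) n
  have hV0 : V 0 = f' (u 0) := rfl
  have hVs : ∀ n, V (n+1) = f' (V n ∩ u (n+1)) := fun n => rfl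
  have hinv : ∀ n, IsOpen (V n) ∧ (1:G) ∈ V n ∧ V n ⊆ u n := by
    intro n
    induction n with
    | zero =>
      rw [hV0]
      refine ⟨hf'o _ (humem 0), hf'1 _ (humem 0), fun a ha => ?_⟩
      simpa using hf'm _ (humem 0) a ha 1 (hf'1 _ (humem 0))
    | succ k ih =>
      have hmem : V k ∩ u (k+1) ∈ 𝓝 (1:G) :=
        Filter.inter_mem (ih.1.mem_nhds ih.2.1) (humem (k+1))
      rw [hVs k]
      refine ⟨hf'o _ hmem, hf'1 _ hmem, fun a ha => ?_⟩
      have := hf'm _ hmem a ha 1 (hf'1 _ hmem)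
      simpa using this.2
  refine ⟨V, fun n => (hinv n).1, fun n => (hinv n).2.1, ?_, ?_⟩
  · intro n a ha b hb
    rw [hVs n] at ha hb
    have hmem : V n ∩ u (n+1) ∈ 𝓝 (1:G) :=
      Filter.inter_mem ((hinv n).1.mem_nhds (hinv n).2.1) (humem (n+1))
    exact (hf'm _ hmem a ha b hb).1
  · intro s hs
    obtain ⟨n, -, hn⟩ := hu.1.mem_iff.mp hs
    exact ⟨n, ((hinv n).2.2).trans hn⟩

end AuxLemmas

/-- If `(G, τ)` is a Hausdorff feebly compact first-countable paratopological group
(feebly compact: every locally finite family of nonempty open subsets is finite),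
then `G` is submetrizable: there is a metrizable topology on `G` coarser than `τ`. -/
theorem hausdorff_feeblyCompact_firstCountable_paratopological_group_submetrizable
    {G : Type*} [Group G] [t : TopologicalSpace G] [T2Space G] [ContinuousMul G]
    [FirstCountableTopology G]
    (hfc : ∀ 𝒰 : Set (Set G), (∀ U ∈ 𝒰, IsOpen U ∧ U.Nonempty) →
      LocallyFinite (fun U : 𝒰 => (U : Set G)) → 𝒰.Finite) :
    ∃ t' : TopologicalSpace G, t ≤ t' ∧ @TopologicalSpace.MetrizableSpace G t' := by
  obtain ⟨V, hVo, hV1, hVm, hVb⟩ := exists_nbhd_seq G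
  have hVanti : Antitone V := antitone_nat_of_succ_le fun n x hx => by
    simpa using hVm n x hx 1 (hV1 (n+1))
  -- Hausdorff fact: a point in all closures of the V n is 1
  have hclos : ∀ z : G, (∀ s, z ∈ closure (V s)) → z = 1 := by
    intro z hz
    by_contra hne
    obtain ⟨A, Bs, hAo, hBo, hzA, h1B, hdisj⟩ := t2_separation hne
    obtain ⟨s, hsB⟩ := hVb Bs (hBo.mem_nhds h1B)
    obtain ⟨w, hwA, hwV⟩ := mem_closure_iff.mp (hz s) A hAo hzA
    exact Set.disjoint_left.mp hdisj hwA (hsB hwV)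
  -- Key lemma via feeble compactness
  have hA : ∀ n, ∃ m, (V m)⁻¹ ⊆ closure (V n) := by
    intro n
    by_contra hcon
    push_neg at hcon
    have hx : ∀ m, ∃ x, x ∈ V m ∧ x⁻¹ ∉ closure (V n) := by
      intro m
      obtain ⟨w, hw, hwn⟩ := Set.not_subset.mp (hcon m)
      exact ⟨w⁻¹, Set.mem_inv.mp hw, by simpa using hwn⟩
    choose x hxV hxn using hx
    set O : ℕ → Set G := fun m => {z | x m * z ∈ V (m+1)} ∩ (closure (V n))ᶜ with hOdef
    have hOo : ∀ m, IsOpen (O m) :=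
      fun m => ((hVo (m+1)).preimage (continuous_const.mul continuous_id)).inter
        isClosed_closure.isOpen_compl
    have hOne : ∀ m, (x m)⁻¹ ∈ O m := fun m => ⟨by simp [hV1 (m+1)], hxn m⟩
    have hcore : ∀ y : G,
        (∀ M : Set G, IsOpen M → y ∈ M → {m : ℕ | (O m ∩ M).Nonempty}.Infinite) →
        ∀ s, y ∈ closure (V s) := by
      intro y hy s
      rw [mem_closure_iff]
      intro M₀ hM₀o hyM₀
      have hc : Continuous fun p : G × G => p.1 * (y * p.2) :=
        continuous_fst.mul (continuous_const.mul continuous_snd)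
      have h11 : (fun p : G × G => p.1 * (y * p.2)) (1, 1) ∈ M₀ := by simpa using hyM₀
      have hpre : (fun p : G × G => p.1 * (y * p.2)) ⁻¹' M₀ ∈ 𝓝 ((1:G), (1:G)) :=
        ((hM₀o.preimage hc)).mem_nhds h11
      rw [mem_nhds_prod_iff] at hpre
      obtain ⟨A, hAn, Bs, hBn, hAB⟩ := hpre
      obtain ⟨j₁, hj₁⟩ := hVb A hAn
      obtain ⟨j₂, hj₂⟩ := hVb Bs hBn
      set J := max j₁ j₂ with hJ
      have hMopen : IsOpen {z : G | y⁻¹ * z ∈ V J} :=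
        (hVo J).preimage (continuous_const.mul continuous_id)
      have hyM : y ∈ {z : G | y⁻¹ * z ∈ V J} := by simp [hV1 J]
      obtain ⟨m, hmS, hmgt⟩ := (hy _ hMopen hyM).exists_gt (max J s)
      obtain ⟨p, hpO, hpM⟩ := hmS
      have hxmA : x m ∈ A :=
        hj₁ (hVanti ((le_max_left j₁ j₂).trans ((le_max_left J s).trans hmgt.le)) (hxV m))
      have hbB : y⁻¹ * p ∈ Bs :=
        hj₂ (hVanti (le_max_right j₁ j₂) hpM)
      refine ⟨x m * p, ?_, ?_⟩
      · have := hAB (Set.mk_mem_prod hxmA hbB)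
        simpa using this
      · have hs' : s ≤ m + 1 :=
          le_of_lt (Nat.lt_succ_of_lt (lt_of_le_of_lt (le_max_right J s) hmgt))
        exact hVanti hs' hpO.1
    set 𝒰 : Set (Set G) := Set.range O with h𝒰
    have hUprop : ∀ Uu ∈ 𝒰, IsOpen Uu ∧ Uu.Nonempty := by
      rintro _ ⟨m, rfl⟩; exact ⟨hOo m, ⟨_, hOne m⟩⟩
    have htrans : ∀ M : Set G, {i : ↥𝒰 | ((i : Set G) ∩ M).Nonempty}.Infinite →
        {m : ℕ | (O m ∩ M).Nonempty}.Infinite := by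
      intro M hinf
      by_contra hfin
      rw [Set.not_infinite] at hfin
      apply hinf
      have hsub : {i : ↥𝒰 | ((i : Set G) ∩ M).Nonempty} ⊆
          (fun m : ℕ => (⟨O m, Set.mem_range_self m⟩ : ↥𝒰)) '' {m : ℕ | (O m ∩ M).Nonempty} := by
        rintro ⟨S, hS⟩ hi
        obtain ⟨m, rfl⟩ := hS
        exact ⟨m, hi, rfl⟩
      exact (hfin.image _).subset hsub
    have hLF : LocallyFinite (fun Uu : ↥𝒰 => (Uu : Set G)) := by
      intro y
      by_contra hnl
      push_neg at hnl
      have hy : ∀ M : Set G, IsOpen M → y ∈ M → {m : ℕ | (O m ∩ M).Nonempty}.Infinite := by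
        intro M hMo hyM
        exact htrans M (hnl M (hMo.mem_nhds hyM))
      have hy1 : y = 1 := hclos y (hcore y hy)
      have hfinn : {i : ↥𝒰 | ((i : Set G) ∩ V n).Nonempty}.Finite := by
        convert Set.finite_empty
        rw [Set.eq_empty_iff_forall_notMem]
        rintro ⟨S, hS⟩ hi
        obtain ⟨m, rfl⟩ := hS
        obtain ⟨w, hwO, hwV⟩ := hi
        exact hwO.2 (subset_closure hwV)
      exact (hnl (V n) ((hVo n).mem_nhds (by rw [hy1]; exact hV1 n))) hfinn
    have hfin𝒰 : 𝒰.Finite := hfc 𝒰 hUprop hLF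
    haveI := hfin𝒰.to_subtype
    obtain ⟨i₀, hfib⟩ :=
      Finite.exists_infinite_fiber (fun m : ℕ => (⟨O m, Set.mem_range_self m⟩ : ↥𝒰))
    have hsubfib : ((fun m : ℕ => (⟨O m, Set.mem_range_self m⟩ : ↥𝒰)) ⁻¹' {i₀}) ⊆
        {m : ℕ | O m = (i₀ : Set G)} := by
      intro m hm
      exact congrArg Subtype.val hm
    have hinfib : {m : ℕ | O m = (i₀ : Set G)}.Infinite :=
      Set.Infinite.mono hsubfib (Set.infinite_coe_iff.mp hfib)
    obtain ⟨m₀, hm₀⟩ := hinfib.nonempty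
    have hpne : ((i₀ : Set G)).Nonempty := by
      rw [← hm₀]; exact ⟨_, hOne m₀⟩
    obtain ⟨p, hp⟩ := hpne
    have hpcl : ∀ s, p ∈ closure (V s) := by
      refine hcore p (fun M hMo hpM => hinfib.mono ?_)
      intro m hm
      refine ⟨p, ?_, hpM⟩
      rw [Set.mem_setOf_eq] at hm
      rw [hm]; exact hp
    have hp1 : p = 1 := hclos p hpcl
    have hpOm : p ∈ O m₀ := by rw [hm₀]; exact hp
    exact hpOm.2 (subset_closure (by rw [hp1]; exact hV1 n))
  -- Build the symmetric sets and conclude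
  set Wn : ℕ → Set G := fun n => closure (V n) ∩ {z | z⁻¹ ∈ closure (V n)} with hWdef
  have hW1 : ∀ n, (1:G) ∈ Wn n :=
    fun n => ⟨subset_closure (hV1 n), by simpa using subset_closure (hV1 n)⟩
  have hWsym : ∀ n, ∀ z ∈ Wn n, z⁻¹ ∈ Wn n := fun n z hz => ⟨hz.2, by simpa using hz.1⟩
  have hWmul : ∀ n, ∀ a ∈ Wn (n+1), ∀ b ∈ Wn (n+1), a * b ∈ Wn n := by
    intro n a ha b hb
    constructor
    · exact map_mem_closure₂ continuous_mul ha.1 hb.1 (hVm n)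
    · have h2 : b⁻¹ * a⁻¹ ∈ closure (V n) :=
        map_mem_closure₂ continuous_mul hb.2 ha.2 (hVm n)
      show (a * b)⁻¹ ∈ closure (V n)
      rw [mul_inv_rev]; exact h2
  have hWsep : ∀ z : G, (∀ n, z ∈ Wn n) → z = 1 := fun z hz => hclos z fun s => (hz s).1
  have hcoarse : ∀ s : Set G, (∀ x ∈ s, ∃ n, {y : G | x⁻¹ * y ∈ Wn n} ⊆ s) → IsOpen s := by
    intro s hcond
    rw [isOpen_iff_mem_nhds]
    intro z hz
    obtain ⟨n, hn⟩ := hcond z hz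
    obtain ⟨m, hm⟩ := hA n
    have hk : V (max n m) ⊆ Wn n := by
      intro w hw
      refine ⟨subset_closure (hVanti (le_max_left n m) hw), hm ?_⟩
      exact Set.inv_mem_inv.mpr (hVanti (le_max_right n m) hw)
    have hnb : {y : G | z⁻¹ * y ∈ V (max n m)} ∈ 𝓝 z := by
      refine (((hVo _).preimage (continuous_const.mul continuous_id)).mem_nhds ?_)
      simp [hV1]
    exact Filter.mem_of_superset hnb fun y hy => hn (hk hy)
  obtain ⟨t', hmet, hopen⟩ := aux_exists_metrizable Wn hW1 hWsym hWmul hWsep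
  exact ⟨t', isOpen_implies_isOpen_iff.mp (fun s hs => hcoarse s (hopen s hs)), hmet⟩
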